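/- Let G be a finite abelian group, D ⊆ G of size n, k ≥ 1, and χ a character of order greater than k. With Φ = max_{ψ ≠ ψ_0} |∑_{a∈D} ψ(a)|, one has |∑_{τ ∈ S_k} sign(τ) · ∏_{cycles c of τ} ∑_{a∈D} χ^{|c|}(a)| ≤ k! · binom(Φ + k − 1, k). -/

import Mathlib

open Finset

/-- The generalized binomial coefficient `binom(x, k) = x (x-1) ⋯ (x-k+1) / k!` for real `x`. -/
noncomputable def rchoose (x : ℝ) (k : ℕ) : ℝ :=
  (∏ i ∈ Finset.range k, (x - i)) / (Nat.factorial k)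

/-- The full cycle type of a permutation of `Fin k`, including fixed points as
cycles of length `1`. -/
def fullCycleType {k : ℕ} (σ : Equiv.Perm (Fin k)) : Multiset ℕ :=
  σ.cycleType + Multiset.replicate (k - σ.cycleType.sum) 1

section Aux

open Equiv Equiv.Perm Finset

variable {α : Type*} [Fintype α] [DecidableEq α]

/-- number of non-fixed cycles minus... : sum - card of cycleType -/
def dd (f : Perm α) : ℕ := f.cycleType.sum - Multiset.card f.cycleType

lemma card_le_sum_ct (f : Perm α) : Multiset.card f.cycleType ≤ f.cycleType.sum :=
  by
  calc Multiset.card f.cycleType = Multiset.card f.cycleType • 1 := (smul_eq_mul _ _).trans (mul_one _) |>.symm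
  _ ≤ f.cycleType.sum := Multiset.card_nsmul_le_sum fun x hx => le_trans one_le_two (Equiv.Perm.two_le_of_mem_cycleType hx)

lemma dd_swap_mul {f : Perm α} {a b : α} (hab : a ≠ b) (ha : f a = a) :
    dd (swap a b * f) = dd f + 1 := by
  by_cases hb : f b = b
  · have hdisj : Disjoint (swap a b) f := by
      intro x
      by_cases hx : x = a
      · exact Or.inr (hx ▸ ha)
      by_cases hx' : x = b
      · exact Or.inr (hx' ▸ hb)
      · exact Or.inl (swap_apply_of_ne_of_ne hx hx')
    have h1 : (swap a b * f).cycleType = (swap a b).cycleType + f.cycleType :=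
      Equiv.Perm.Disjoint.cycleType_mul hdisj
    have h2 : (swap a b).cycleType = {2} := by
      rw [(isCycle_swap hab).cycleType, card_support_swap hab]
    have hle := card_le_sum_ct f
    simp [dd, h1, h2]
    omega
  · -- b is in a nontrivial cycle of f; inserting a into it
    have hbs : b ∈ f.support := Equiv.Perm.mem_support.2 hb
    obtain ⟨c, hc⟩ : ∃ c, f.cycleOf b = c := ⟨_, rfl⟩
    obtain ⟨l, hl⟩ : ∃ l, f.toList b = l := ⟨_, rfl⟩
    have hnd : l.Nodup := hl ▸ Equiv.Perm.nodup_toList f b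
    have hlen2 : 2 ≤ l.length := hl ▸ Equiv.Perm.two_le_length_toList_iff_mem_support.2 hbs
    have hform : l.formPerm = c := by
      have h := Equiv.Perm.formPerm_toList f b
      rw [hl, hc] at h; exact h
    have hlenc : l.length = c.support.card := by
      have h := Equiv.Perm.length_toList f b
      rw [hl, hc] at h; exact h
    have hanl : a ∉ l := by
      intro hal
      rw [← hl] at hal
      have h1 := (Equiv.Perm.mem_toList_iff.1 hal).1
      have h2 : a ∈ f.support := by
        have h3 := (Equiv.Perm.mem_support_cycleOf_iff).2 ⟨h1, hbs⟩
        exact Equiv.Perm.support_cycleOf_le f b h3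
      exact (Equiv.Perm.mem_support.1 h2) ha
    have hne : l ≠ [] := by intro h; rw [h] at hlen2; simp at hlen2
    have hbt : l = b :: l.tail := by
      have h0 := Equiv.Perm.toList_getElem_zero (p := f) (x := b) hbs
      obtain ⟨x, xs, hxs⟩ : ∃ x xs, l = x :: xs := by
        cases hll : l with
        | nil => exact absurd hll hne
        | cons x xs => exact ⟨x, xs, rfl⟩
      rw [hxs]
      simp only [List.tail_cons]
      congr 1
      have heq : f.toList b = x :: xs := hl.trans hxs
      have h5 := List.get_of_eq heq ⟨0, by rw [heq]; exact Nat.succ_pos _⟩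
      simp only [List.get_cons_zero] at h5
      exact h5.symm.trans h0
    have hndal : (a :: l).Nodup := List.nodup_cons.2 ⟨hanl, hnd⟩
    have hkey : (a :: l).formPerm = swap a b * c := by
      rw [← hform]
      conv_lhs => rw [hbt]
      conv_rhs => rw [hbt]
      exact List.formPerm_cons_cons a b l.tail
    have hcyc : (a :: l).formPerm.IsCycle :=
      List.isCycle_formPerm hndal (hlen2.trans (Nat.le_succ _))
    have hsupp : (a :: l).formPerm.support = (a :: l).toFinset :=
      List.support_formPerm_of_nodup _ hndal (by
        intro x hx
        apply_fun List.length at hx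
        simp only [List.length_cons, List.length_singleton, List.length_nil] at hx
        omega)
    have hcardsupp : (a :: l).formPerm.support.card = l.length + 1 := by
      rw [hsupp, List.card_toFinset, hndal.dedup]
      rfl
    -- decompose f = g * c
    have hcmem : c ∈ f.cycleFactorsFinset :=
      hc ▸ Equiv.Perm.cycleOf_mem_cycleFactorsFinset_iff.2 hbs
    obtain ⟨g, hg⟩ : ∃ g, f * c⁻¹ = g := ⟨_, rfl⟩
    have hdgc : Disjoint g c :=
      hg ▸ Equiv.Perm.disjoint_mul_inv_of_mem_cycleFactorsFinset hcmem
    have hfgc : f = g * c := by rw [← hg]; group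
    have hccyc : c.IsCycle := hc ▸ Equiv.Perm.isCycle_cycleOf f hb
    have hca : c a = a := by
      rw [← hc, Equiv.Perm.cycleOf_apply]
      split <;> simp [ha]
    have hga : g a = a := by
      have h4 : c⁻¹ a = a := by conv_lhs => rw [← hca]; simp
      rw [← hg, Perm.mul_apply, h4, ha]
    have hgl : ∀ x ∈ l, g x = x := by
      intro x hx
      rw [← hl] at hx
      have hx1 := (Equiv.Perm.mem_toList_iff.1 hx)
      have hxc : x ∈ c.support := by
        rw [← hc]
        exact Equiv.Perm.mem_support_cycleOf_iff.2 ⟨hx1.1, hx1.2⟩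
      rcases hdgc x with h | h
      · exact h
      · exact absurd h (Equiv.Perm.mem_support.1 hxc)
    have hdisj2 : Disjoint (a :: l).formPerm g := by
      intro x
      by_cases hx : (a :: l).formPerm x = x
      · exact Or.inl hx
      · right
        have hxmem : x ∈ a :: l := List.mem_of_formPerm_apply_ne hx
        rcases List.mem_cons.1 hxmem with rfl | hxl
        · exact hga
        · exact hgl x hxl
    have hnew : swap a b * f = (a :: l).formPerm * g := by
      rw [hkey, hfgc, hdgc.commute.eq, ← mul_assoc]
    have hct1 : (swap a b * f).cycleType = {(l.length + 1)} + g.cycleType := by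
      rw [hnew, Equiv.Perm.Disjoint.cycleType_mul hdisj2, hcyc.cycleType, hcardsupp]
    have hct2 : f.cycleType = g.cycleType + {l.length} := by
      rw [hfgc, Equiv.Perm.Disjoint.cycleType_mul hdgc, hccyc.cycleType, ← hlenc]
    have hle := card_le_sum_ct g
    have e1 : (swap a b * f).cycleType.sum = l.length + 1 + g.cycleType.sum := by
      rw [hct1]; simp
    have e2 : Multiset.card (swap a b * f).cycleType = 1 + Multiset.card g.cycleType := by
      rw [hct1]; simp [add_comm]
    have e3 : f.cycleType.sum = g.cycleType.sum + l.length := by rw [hct2]; simp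
    have e4 : Multiset.card f.cycleType = Multiset.card g.cycleType + 1 := by
      rw [hct2]; simp
    simp only [dd, e1, e2, e3, e4]
    omega

lemma dd_le (f : Perm α) : dd f ≤ Fintype.card α := by
  have h1 : f.cycleType.sum = f.support.card := Equiv.Perm.sum_cycleType f
  have h2 : f.support.card ≤ Fintype.card α := Finset.card_le_card (Finset.subset_univ _)
  simp only [dd]
  omega

def succEquiv (n : ℕ) : Fin n ≃ {i : Fin (n + 1) // i ≠ 0} where
  toFun x := ⟨x.succ, Fin.succ_ne_zero x⟩
  invFun y := y.1.pred y.2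
  left_inv x := Fin.pred_succ x
  right_inv y := Subtype.ext (Fin.succ_pred y.1 y.2)

lemma decomposeFin_zero_eq {n : ℕ} (e : Perm (Fin n)) :
    Equiv.Perm.decomposeFin.symm (0, e) = e.extendDomain (succEquiv n) := by
  ext x
  refine Fin.cases ?_ ?_ x
  · rw [Equiv.Perm.decomposeFin_symm_apply_zero]
    rw [Equiv.Perm.extendDomain_apply_not_subtype]
    simp
  · intro i
    rw [Equiv.Perm.decomposeFin_symm_apply_succ]
    have h : (i.succ : Fin (n + 1)) = ((succEquiv n) i : Fin (n + 1)) := rfl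
    rw [h, Equiv.Perm.extendDomain_apply_image]
    simp [succEquiv]

lemma dd_decomposeFin {n : ℕ} (p : Fin (n + 1)) (e : Perm (Fin n)) :
    dd (Equiv.Perm.decomposeFin.symm (p, e)) = if p = 0 then dd e else dd e + 1 := by
  have hzero : dd (Equiv.Perm.decomposeFin.symm (0, e)) = dd e := by
    rw [decomposeFin_zero_eq]
    simp only [dd, Equiv.Perm.cycleType_extendDomain]
  by_cases hp : p = 0
  · rw [hp, if_pos rfl, hzero]
  · rw [if_neg hp]
    have hsplit : Equiv.Perm.decomposeFin.symm (p, e) =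
        swap 0 p * Equiv.Perm.decomposeFin.symm (0, e) := by
      ext x
      refine Fin.cases ?_ ?_ x
      · simp
      · intro i; simp
    rw [hsplit, dd_swap_mul (fun h => hp h.symm)
      (by rw [Equiv.Perm.decomposeFin_symm_apply_zero]), hzero]

lemma perm_sum_pow_cc (n : ℕ) (x : ℝ) :
    ∑ σ : Perm (Fin n), x ^ (n - dd σ) = ∏ i ∈ range n, (x + i) := by
  induction n with
  | zero =>
    rw [Finset.prod_range_zero]
    rw [Fintype.sum_subsingleton _ (1 : Perm (Fin 0))]
    simp [dd]
  | succ n ih =>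
    rw [← Equiv.sum_comp (Equiv.Perm.decomposeFin (n := n)).symm
      (fun σ => x ^ (n + 1 - dd σ)), Fintype.sum_prod_type]
    have key : ∀ p : Fin (n + 1), ∀ e : Perm (Fin n),
        x ^ (n + 1 - dd (Equiv.Perm.decomposeFin.symm (p, e))) =
          (if p = 0 then x else 1) * x ^ (n - dd e) := by
      intro p e
      have hle : dd e ≤ n := by simpa using dd_le e
      rw [dd_decomposeFin]
      by_cases hp : p = 0
      · rw [if_pos hp, if_pos hp]
        rw [show n + 1 - dd e = (n - dd e) + 1 by omega, pow_succ]
        ring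
      · rw [if_neg hp, if_neg hp, one_mul]
        congr 1
        omega
    simp only [key]
    have hmul : ∀ p : Fin (n + 1),
        ∑ e : Perm (Fin n), (if p = 0 then x else 1) * x ^ (n - dd e) =
          (if p = 0 then x else 1) * ∑ e : Perm (Fin n), x ^ (n - dd e) :=
      fun p => (Finset.mul_sum _ _ _).symm
    simp only [hmul, ih]
    rw [← Finset.sum_mul, Fin.sum_univ_succ]
    simp only [if_pos rfl, Fin.succ_ne_zero, if_neg, ite_false]
    rw [Finset.prod_range_succ, Finset.sum_const]
    simp
    ring

lemma card_fullCycleType {k : ℕ} (σ : Equiv.Perm (Fin k)) :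
    Multiset.card (fullCycleType σ) = k - dd σ := by
  have h1 := card_le_sum_ct σ
  have h2 : σ.cycleType.sum ≤ k := by
    have := Equiv.Perm.sum_cycleType σ
    have h3 : σ.support.card ≤ k := by
      simpa using Finset.card_le_card (Finset.subset_univ σ.support)
    omega
  simp only [fullCycleType, Multiset.card_add, Multiset.card_replicate, dd]
  omega

lemma mem_fullCycleType {k : ℕ} {σ : Equiv.Perm (Fin k)} {c : ℕ}
    (hc : c ∈ fullCycleType σ) (hk : 1 ≤ k) : 1 ≤ c ∧ c ≤ k := by
  have h2 : σ.cycleType.sum ≤ k := by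
    have := Equiv.Perm.sum_cycleType σ
    have h3 : σ.support.card ≤ k := by
      simpa using Finset.card_le_card (Finset.subset_univ σ.support)
    omega
  rcases Multiset.mem_add.1 hc with h | h
  · have := Equiv.Perm.two_le_of_mem_cycleType h
    have hcs : c ≤ σ.cycleType.sum :=
      Multiset.single_le_sum (fun x _ => Nat.zero_le x) c h
    omega
  · have := Multiset.eq_of_mem_replicate h
    omega

lemma multiset_prod_le_pow {s : Multiset ℝ} {Φ : ℝ} (hΦ : 0 ≤ Φ)
    (h : ∀ x ∈ s, 0 ≤ x ∧ x ≤ Φ) : s.prod ≤ Φ ^ Multiset.card s := by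
  induction s using Multiset.induction with
  | empty => simp
  | cons a s ih =>
    rw [Multiset.prod_cons, Multiset.card_cons, pow_succ']
    have ha := h a (Multiset.mem_cons_self a s)
    have hs : ∀ x ∈ s, 0 ≤ x ∧ x ≤ Φ := fun x hx => h x (Multiset.mem_cons_of_mem hx)
    have hprod : 0 ≤ s.prod := Multiset.prod_nonneg fun x hx => (hs x hx).1
    exact mul_le_mul ha.2 (ih hs) hprod hΦ

end Aux

open scoped Classical in
/-- For a character `χ` of order greater than `k ≥ 1` of a finite abelian group `G` and
`D ⊆ G` with `|D| = n`, with `Φ` the maximum of `|∑_{a ∈ D} ψ(a)|` over nontrivial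
characters `ψ`, the signed sum `∑_{τ ∈ S_k} sign(τ) ∏_{cycles c of τ} ∑_{a ∈ D} χ^{|c|}(a)`
is bounded in absolute value by `k! binom(Φ + k − 1, k)`. -/
theorem stmt12 {G : Type*} [AddCommGroup G] [Fintype G]
    (D : Finset G) (k : ℕ) (hk : 1 ≤ k) (χ : AddChar G ℂ)
    (hχ : k < orderOf χ)
    (Φ : ℝ)
    (hΦ : IsGreatest
      {x : ℝ | ∃ ψ : AddChar G ℂ, ψ ≠ 1 ∧ x = ‖∑ a ∈ D, ψ a‖} Φ) :
    ‖∑ σ : Equiv.Perm (Fin k), ((Equiv.Perm.sign σ : ℤ) : ℂ) *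
        (Multiset.map (fun c => ∑ a ∈ D, χ (c • a)) (fullCycleType σ)).prod‖ ≤
      (Nat.factorial k : ℝ) * rchoose (Φ + k - 1) k := by
  -- Φ is nonnegative
  have hΦ0 : 0 ≤ Φ := by
    obtain ⟨ψ, -, hψ⟩ := hΦ.1
    rw [hψ]; exact norm_nonneg _
  -- bound on each character sum
  have hfac : ∀ c : ℕ, 1 ≤ c → c ≤ k → ‖∑ a ∈ D, χ (c • a)‖ ≤ Φ := by
    intro c hc1 hck
    have hpow : ∀ a : G, χ (c • a) = (χ ^ c) a := by
      intro a
      rw [AddChar.map_nsmul_eq_pow, AddChar.pow_eq_nsmul, AddChar.nsmul_apply]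
    have hne : χ ^ c ≠ 1 := by
      intro h
      have := Nat.le_of_dvd (by omega) (orderOf_dvd_of_pow_eq_one h)
      omega
    refine hΦ.2 ⟨χ ^ c, hne, ?_⟩
    simp only [hpow]
  -- termwise bound
  have hterm : ∀ σ : Equiv.Perm (Fin k),
      ‖((Equiv.Perm.sign σ : ℤ) : ℂ) *
        (Multiset.map (fun c => ∑ a ∈ D, χ (c • a)) (fullCycleType σ)).prod‖ ≤
      Φ ^ (k - dd σ) := by
    intro σ
    rw [norm_mul]
    have hsign : ‖((Equiv.Perm.sign σ : ℤ) : ℂ)‖ = 1 := by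
      rcases Int.units_eq_one_or (Equiv.Perm.sign σ) with h | h <;> simp [h]
    rw [hsign, one_mul, ← normHom_apply, map_multiset_prod]
    rw [Multiset.map_map]
    have hbound : (Multiset.map (normHom ∘ fun c => ∑ a ∈ D, χ (c • a))
        (fullCycleType σ)).prod ≤ Φ ^ Multiset.card (Multiset.map
          (normHom ∘ fun c => ∑ a ∈ D, χ (c • a)) (fullCycleType σ)) := by
      apply multiset_prod_le_pow hΦ0
      intro x hx
      obtain ⟨c, hc, rfl⟩ := Multiset.mem_map.1 hx
      obtain ⟨h1, h2⟩ := mem_fullCycleType hc hk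
      exact ⟨norm_nonneg (∑ a ∈ D, χ (c • a)), hfac c h1 h2⟩
    rwa [Multiset.card_map, card_fullCycleType] at hbound
  -- sum bound
  calc ‖∑ σ : Equiv.Perm (Fin k), ((Equiv.Perm.sign σ : ℤ) : ℂ) *
        (Multiset.map (fun c => ∑ a ∈ D, χ (c • a)) (fullCycleType σ)).prod‖
      ≤ ∑ σ : Equiv.Perm (Fin k), ‖((Equiv.Perm.sign σ : ℤ) : ℂ) *
        (Multiset.map (fun c => ∑ a ∈ D, χ (c • a)) (fullCycleType σ)).prod‖ :=
        norm_sum_le _ _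
    _ ≤ ∑ σ : Equiv.Perm (Fin k), Φ ^ (k - dd σ) := Finset.sum_le_sum fun σ _ => hterm σ
    _ = ∏ i ∈ Finset.range k, (Φ + i) := perm_sum_pow_cc k Φ
    _ = (Nat.factorial k : ℝ) * rchoose (Φ + k - 1) k := by
        rw [rchoose, mul_div_cancel₀]
        · rw [← Finset.prod_range_reflect (fun i => Φ + (i : ℝ)) k]
          apply Finset.prod_congr rfl
          intro j hj
          have hj' : j < k := Finset.mem_range.1 hj
          have : ((k - 1 - j : ℕ) : ℝ) = (k : ℝ) - 1 - j := by
            have h1 : 1 ≤ k := hk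
            push_cast [Nat.cast_sub (by omega : j ≤ k - 1), Nat.cast_sub h1]
            ring
          rw [this]
          ring
        · exact_mod_cast Nat.factorial_ne_zero k
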